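/- Let q be a homogeneous polynomial of degree 2 in the variables x₁, x₂, x₃, x₄ whose polar form is nondegenerate, written as q = x₁·h₁ + q₁ with h₁ a linear form and q₁ a quadratic form in the variables x₂, x₃, x₄ only. Then h₁ ≠ 0 and the restriction of q₁ to the 2-dimensional subspace ker h₁ ⊆ ℂ³ is a nondegenerate quadratic form (i.e., q₁ restricted to ker h₁ has rank two; equivalently, the plane {h₁ = 0} is not tangent to the quadric cone {q₁ = 0}). This is the computation showing that the Fano variety of a cuspidal cyclic cubic fourfold has transversal A₂-singularities along Σ. -/

import Mathlib

open MvPolynomial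

set_option maxHeartbeats 1000000

private lemma aux2add (k0 k1 k2 k3 : ℕ) (hk : k0+k1+k2+k3 = 2)
    (a0 a1 a2 a3 b0 b1 b2 b3 c0 c1 c2 c3 : ℂ) :
    (a0+b0+c0)^k0*((a1+b1+c1)^k1*((a2+b2+c2)^k2*(a3+b3+c3)^k3))
    - (a0+b0)^k0*((a1+b1)^k1*((a2+b2)^k2*(a3+b3)^k3))
    - (a0+c0)^k0*((a1+c1)^k1*((a2+c2)^k2*(a3+c3)^k3))
    - (b0+c0)^k0*((b1+c1)^k1*((b2+c2)^k2*(b3+c3)^k3))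
    + a0^k0*(a1^k1*(a2^k2*a3^k3)) + b0^k0*(b1^k1*(b2^k2*b3^k3)) + c0^k0*(c1^k1*(c2^k2*c3^k3)) = 0 := by
  have h0 : k0 ≤ 2 := by omega
  have h1 : k1 ≤ 2 := by omega
  have h2 : k2 ≤ 2 := by omega
  have h3 : k3 ≤ 2 := by omega
  interval_cases k0 <;> interval_cases k1 <;> interval_cases k2 <;> interval_cases k3 <;> first | omega | ring

private lemma aux2smul (k0 k1 k2 k3 : ℕ) (hk : k0+k1+k2+k3 = 2)
    (t a0 a1 a2 a3 b0 b1 b2 b3 : ℂ) :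
    (a0+t*b0)^k0*((a1+t*b1)^k1*((a2+t*b2)^k2*(a3+t*b3)^k3))
    = a0^k0*(a1^k1*(a2^k2*a3^k3))
      + t * ((a0+b0)^k0*((a1+b1)^k1*((a2+b2)^k2*(a3+b3)^k3))
             - a0^k0*(a1^k1*(a2^k2*a3^k3)) - b0^k0*(b1^k1*(b2^k2*b3^k3)))
      + t^2 * (b0^k0*(b1^k1*(b2^k2*b3^k3))) := by
  have h0 : k0 ≤ 2 := by omega
  have h1 : k1 ≤ 2 := by omega
  have h2 : k2 ≤ 2 := by omega
  have h3 : k3 ≤ 2 := by omega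
  interval_cases k0 <;> interval_cases k1 <;> interval_cases k2 <;> interval_cases k3 <;> first | omega | ring

private lemma aux1add (k0 k1 k2 k3 : ℕ) (hk : k0+k1+k2+k3 = 1)
    (a0 a1 a2 a3 b0 b1 b2 b3 : ℂ) :
    (a0+b0)^k0*((a1+b1)^k1*((a2+b2)^k2*(a3+b3)^k3))
    = a0^k0*(a1^k1*(a2^k2*a3^k3)) + b0^k0*(b1^k1*(b2^k2*b3^k3)) := by
  have h0 : k0 ≤ 1 := by omega
  have h1 : k1 ≤ 1 := by omega
  have h2 : k2 ≤ 1 := by omega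
  have h3 : k3 ≤ 1 := by omega
  interval_cases k0 <;> interval_cases k1 <;> interval_cases k2 <;> interval_cases k3 <;> first | omega | ring

private lemma aux1smul (k0 k1 k2 k3 : ℕ) (hk : k0+k1+k2+k3 = 1)
    (t b0 b1 b2 b3 : ℂ) :
    (t*b0)^k0*((t*b1)^k1*((t*b2)^k2*(t*b3)^k3)) = t * (b0^k0*(b1^k1*(b2^k2*b3^k3))) := by
  have h0 : k0 ≤ 1 := by omega
  have h1 : k1 ≤ 1 := by omega
  have h2 : k2 ≤ 1 := by omega
  have h3 : k3 ≤ 1 := by omega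
  interval_cases k0 <;> interval_cases k1 <;> interval_cases k2 <;> interval_cases k3 <;> first | omega | ring

private lemma eval_mon (x : Fin 4 → ℂ) (m : Fin 4 →₀ ℕ) (c : ℂ) :
    eval x (monomial m c) = c * (x 0 ^ m 0 * (x 1 ^ m 1 * (x 2 ^ m 2 * x 3 ^ m 3))) := by
  rw [eval_monomial, Finsupp.prod_pow, Fin.prod_univ_four]; ring

private lemma deg_four {n : ℕ} {p : MvPolynomial (Fin 4) ℂ} (hp : p.IsHomogeneous n)
    {m : Fin 4 →₀ ℕ} (hm : m ∈ p.support) : m 0 + m 1 + m 2 + m 3 = n := by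
  have h1 : (Finsupp.weight 1) m = n := hp (mem_support_iff.mp hm)
  change (Finsupp.weight (fun _ => (1:ℕ))) m = n at h1
  rw [← Finsupp.degree_eq_weight_one] at h1
  rw [← h1, Finsupp.degree_apply]
  rw [Finset.sum_subset (Finset.subset_univ m.support) (by intro i _ hi; simpa using hi)]
  rw [Fin.sum_univ_four]

private lemma eval_as_sum (p : MvPolynomial (Fin 4) ℂ) (x : Fin 4 → ℂ) :
    eval x p = ∑ m ∈ p.support, coeff m p * (x 0 ^ m 0 * (x 1 ^ m 1 * (x 2 ^ m 2 * x 3 ^ m 3))) := by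
  conv_lhs => rw [p.as_sum]
  rw [map_sum]
  exact Finset.sum_congr rfl fun m _ => eval_mon x m _

/-- evaluation ignores the first coordinate for polys not involving `x 0`. -/
private lemma eval_indep {p : MvPolynomial (Fin 4) ℂ} (hp : ∀ m ∈ p.support, m 0 = 0)
    {x y : Fin 4 → ℂ} (hxy : ∀ i, i ≠ 0 → x i = y i) : eval x p = eval y p := by
  rw [eval_as_sum, eval_as_sum]
  refine Finset.sum_congr rfl fun m hm => ?_
  rw [hp m hm, hxy 1 (by decide), hxy 2 (by decide), hxy 3 (by decide), pow_zero, pow_zero]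

private lemma eval_zero_of_hom {n : ℕ} {p : MvPolynomial (Fin 4) ℂ} (hp : p.IsHomogeneous n)
    (hn : n ≠ 0) : eval (0 : Fin 4 → ℂ) p = 0 := by
  have : coeff 0 p = 0 := hp.coeff_eq_zero (by simpa [map_zero] using Ne.symm hn)
  simpa [eval_zero, constantCoeff_eq] using this

private lemma polar_add {p : MvPolynomial (Fin 4) ℂ} (hp : p.IsHomogeneous 2)
    (a b c : Fin 4 → ℂ) :
    eval (a+b+c) p - eval (a+b) p - eval (a+c) p - eval (b+c) p
      + eval a p + eval b p + eval c p = 0 := by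
  simp only [eval_as_sum, Pi.add_apply]
  rw [← Finset.sum_sub_distrib, ← Finset.sum_sub_distrib, ← Finset.sum_sub_distrib,
    ← Finset.sum_add_distrib, ← Finset.sum_add_distrib, ← Finset.sum_add_distrib]
  refine Finset.sum_eq_zero fun m hm => ?_
  have h := aux2add (m 0) (m 1) (m 2) (m 3) (deg_four hp hm)
    (a 0) (a 1) (a 2) (a 3) (b 0) (b 1) (b 2) (b 3) (c 0) (c 1) (c 2) (c 3)
  linear_combination (coeff m p) * h

private lemma polar_smul {p : MvPolynomial (Fin 4) ℂ} (hp : p.IsHomogeneous 2)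
    (a b : Fin 4 → ℂ) (t : ℂ) :
    eval (a + t • b) p
      = eval a p + t * (eval (a+b) p - eval a p - eval b p) + t^2 * eval b p := by
  simp only [eval_as_sum, Pi.add_apply, Pi.smul_apply, smul_eq_mul]
  rw [← sub_eq_zero]
  simp only [← Finset.sum_sub_distrib, ← Finset.sum_add_distrib, mul_sub, Finset.mul_sum,
    ← Finset.sum_sub_distrib, ← Finset.sum_add_distrib]
  refine Finset.sum_eq_zero fun m hm => ?_
  have h := aux2smul (m 0) (m 1) (m 2) (m 3) (deg_four hp hm)
    t (a 0) (a 1) (a 2) (a 3) (b 0) (b 1) (b 2) (b 3)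
  linear_combination (coeff m p) * h

private lemma lin_add {p : MvPolynomial (Fin 4) ℂ} (hp : p.IsHomogeneous 1)
    (a b : Fin 4 → ℂ) : eval (a+b) p = eval a p + eval b p := by
  simp only [eval_as_sum, Pi.add_apply]
  rw [← Finset.sum_add_distrib]
  refine Finset.sum_congr rfl fun m hm => ?_
  have h := aux1add (m 0) (m 1) (m 2) (m 3) (deg_four hp hm)
    (a 0) (a 1) (a 2) (a 3) (b 0) (b 1) (b 2) (b 3)
  linear_combination (coeff m p) * h

private lemma lin_smul {p : MvPolynomial (Fin 4) ℂ} (hp : p.IsHomogeneous 1)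
    (b : Fin 4 → ℂ) (t : ℂ) : eval (t • b) p = t * eval b p := by
  simp only [eval_as_sum, Pi.smul_apply, smul_eq_mul]
  rw [Finset.mul_sum]
  refine Finset.sum_congr rfl fun m hm => ?_
  have h := aux1smul (m 0) (m 1) (m 2) (m 3) (deg_four hp hm)
    t (b 0) (b 1) (b 2) (b 3)
  linear_combination (coeff m p) * h

/-- for a nondegenerate quadratic form `q = x₁·h₁ + q₁` in `x₁, x₂, x₃, x₄`
(`h₁` linear and `q₁` quadratic in `x₂, x₃, x₄` only, the coordinates of `ℂ³` being
identified with the hyperplane `{x₁ = 0}` of `ℂ⁴`), one has `h₁ ≠ 0` and the restriction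
of `q₁` to the plane `ker h₁ ⊆ ℂ³` is a nondegenerate quadratic form (rank two):
the plane `{h₁ = 0}` is not tangent to the quadric cone `{q₁ = 0}`. -/
theorem stmt_12 (q h₁ q₁ : MvPolynomial (Fin 4) ℂ)
    (hq : q.IsHomogeneous 2)
    (hqnd : ∀ v : Fin 4 → ℂ,
      (∀ u : Fin 4 → ℂ, (eval (v + u) q - eval v q - eval u q) / 2 = 0) → v = 0)
    (hh₁ : h₁.IsHomogeneous 1) (hq₁ : q₁.IsHomogeneous 2)
    (hh₁0 : ∀ m ∈ h₁.support, m 0 = 0) (hq₁0 : ∀ m ∈ q₁.support, m 0 = 0)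
    (hdec : q = X 0 * h₁ + q₁) :
    h₁ ≠ 0 ∧
    ∀ v : Fin 4 → ℂ, v 0 = 0 → eval v h₁ = 0 →
      (∀ u : Fin 4 → ℂ, u 0 = 0 → eval u h₁ = 0 →
        (eval (v + u) q₁ - eval v q₁ - eval u q₁) / 2 = 0) →
      v = 0 := by
  have eqq : ∀ x : Fin 4 → ℂ, eval x q = x 0 * eval x h₁ + eval x q₁ := by
    intro x; rw [hdec]; simp
  have evq₁0 : eval (0 : Fin 4 → ℂ) q₁ = 0 := eval_zero_of_hom hq₁ (by norm_num)
  -- h₁ ≠ 0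
  have hne : h₁ ≠ 0 := by
    intro h0
    have e0 : (Pi.single 0 1 : Fin 4 → ℂ) ≠ 0 := by
      intro h; simpa using congrFun h 0
    apply e0
    apply hqnd
    intro u
    have hqq₁ : q = q₁ := by rw [hdec, h0]; ring
    have h1 : eval ((Pi.single 0 1 : Fin 4 → ℂ) + u) q₁ = eval u q₁ :=
      eval_indep hq₁0 (fun i hi => by simp [Pi.single_eq_of_ne hi])
    have h2 : eval (Pi.single 0 1 : Fin 4 → ℂ) q₁ = eval (0 : Fin 4 → ℂ) q₁ :=
      eval_indep hq₁0 (fun i hi => by simp [Pi.single_eq_of_ne hi])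
    rw [hqq₁, h1, h2, evq₁0]
    ring
  refine ⟨hne, ?_⟩
  intro v hv0 hvh H
  -- find w with w 0 = 0 and eval w h₁ = 1
  obtain ⟨x, hx0, hxne⟩ : ∃ x : Fin 4 → ℂ, x 0 = 0 ∧ eval x h₁ ≠ 0 := by
    by_contra hcon
    push_neg at hcon
    apply hne
    apply MvPolynomial.funext
    intro y
    rw [map_zero]
    have hy : eval y h₁ = eval (Function.update y 0 0) h₁ :=
      eval_indep hh₁0 (fun i hi => (Function.update_of_ne hi 0 y).symm)
    rw [hy]
    exact hcon _ (Function.update_self 0 0 y)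
  set w : Fin 4 → ℂ := (eval x h₁)⁻¹ • x with hw
  have hw0 : w 0 = 0 := by simp [hw, hx0]
  have hw1 : eval w h₁ = 1 := by
    rw [hw, lin_smul hh₁, inv_mul_cancel₀ hxne]
  set c2 : ℂ := eval (v + w) q₁ - eval v q₁ - eval w q₁ with hc2
  set v' : Fin 4 → ℂ := fun i => if i = 0 then -c2 else v i with hv'
  have hv'0 : v' = 0 → v = 0 := by
    intro h
    funext i
    by_cases hi : i = 0
    · subst hi; simpa using hv0
    · have := congrFun h i
      simp only [hv', hi, if_false, Pi.zero_apply] at this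
      simp [this]
  apply hv'0
  apply hqnd
  intro u
  rw [div_eq_zero_iff]
  left
  set s : ℂ := eval u h₁ with hs
  set u' : Fin 4 → ℂ := fun i => if i = 0 then 0 else u i with hu'
  set z : Fin 4 → ℂ := u' - s • w with hz
  have hzu' : z + s • w = u' := by rw [hz]; abel
  have hz0 : z 0 = 0 := by simp [hz, hu', hw0]
  have hu'h : eval u' h₁ = s := by
    rw [hs]; exact eval_indep hh₁0 (fun i hi => by simp [hu', hi])
  have hzh : eval z h₁ = 0 := by
    have := lin_add hh₁ z (s • w)
    rw [hzu', hu'h, lin_smul hh₁, hw1] at this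
    linear_combination -this
  -- the four key identities
  have Padd := polar_add hq₁ v z (s • w)
  rw [show v + z + s • w = v + u' from by rw [add_assoc, hzu'], hzu'] at Padd
  have F1 : eval (v + z) q₁ - eval v q₁ - eval z q₁ = 0 := by
    have := H z hz0 hzh
    rw [div_eq_zero_iff] at this
    rcases this with h | h
    · exact h
    · norm_num at h
  have G1 : eval (v + s • w) q₁ = eval v q₁ + s * c2 + s^2 * eval w q₁ := by
    rw [polar_smul hq₁ v w s, hc2]
  have G2 : eval (s • w) q₁ = s^2 * eval w q₁ := by
    have := polar_smul hq₁ 0 w s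
    rw [zero_add, zero_add, evq₁0] at this
    rw [this]; ring
  -- expand q
  have A1 := eqq (v' + u)
  have A2 := eqq v'
  have A3 := eqq u
  have B1 : eval (v' + u) h₁ = eval v' h₁ + eval u h₁ := lin_add hh₁ v' u
  have B2 : eval v' h₁ = 0 := by
    rw [← hvh]; exact eval_indep hh₁0 (fun i hi => by simp [hv', hi])
  have C1 : eval (v' + u) q₁ = eval (v + u') q₁ :=
    eval_indep hq₁0 (fun i hi => by simp [hv', hu', hi])
  have C2' : eval v' q₁ = eval v q₁ :=
    eval_indep hq₁0 (fun i hi => by simp [hv', hi])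
  have C3 : eval u q₁ = eval u' q₁ :=
    eval_indep hq₁0 (fun i hi => by simp [hu', hi])
  have D0 : (v' + u) 0 = -c2 + u 0 := by simp [hv']
  have D1 : v' 0 = -c2 := by simp [hv']
  rw [A1, A2, A3, B1, B2, C1, C2', C3, D0, D1, ← hs]
  linear_combination Padd + F1 + G1 - G2
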